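/- Let β > 0 and 0 < α < 2/(λ₁ + β). Then there exists a real number ρ with ϱ ≤ ρ < 1 such that for every iteration t ≥ 0, ‖K(t) − K_β‖_F ≤ ρᵗ · ‖K(0) − K_β‖_F. -/
import Mathlib

open Matrix Finset

noncomputable def frob {n d : ℕ} (M : Matrix (Fin n) (Fin d) ℝ) : ℝ :=
  Real.sqrt (∑ i, ∑ j, M i j ^ 2)

lemma sumsq_eq_trace {d : ℕ} (X : Matrix (Fin d) (Fin d) ℝ) :
    ∑ i, ∑ j, X i j ^ 2 = (Xᵀ * X).trace := by
  rw [Matrix.trace]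
  simp only [Matrix.diag, Matrix.mul_apply, Matrix.transpose_apply, sq]
  exact Finset.sum_comm

lemma frob_mul_orth {d : ℕ} (U M : Matrix (Fin d) (Fin d) ℝ) (hU : Uᵀ * U = 1) :
    frob (U * M) = frob M := by
  unfold frob
  congr 1
  rw [sumsq_eq_trace, sumsq_eq_trace, Matrix.transpose_mul, Matrix.mul_assoc,
    ← Matrix.mul_assoc Uᵀ U M, hU, Matrix.one_mul]

lemma frob_diagonal_mul_le {d : ℕ} (e : Fin d → ℝ) (M : Matrix (Fin d) (Fin d) ℝ)
    (r : ℝ) (hr : 0 ≤ r) (h : ∀ i, |e i| ≤ r) :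
    frob (Matrix.diagonal e * M) ≤ r * frob M := by
  unfold frob
  rw [← Real.sqrt_sq hr, ← Real.sqrt_mul (sq_nonneg r)]
  apply Real.sqrt_le_sqrt
  rw [Finset.mul_sum]
  refine Finset.sum_le_sum fun i _ => ?_
  rw [Finset.mul_sum]
  refine Finset.sum_le_sum fun j _ => ?_
  rw [Matrix.diagonal_mul, mul_pow]
  have h1 : e i ^ 2 ≤ r ^ 2 := by nlinarith [h i, abs_nonneg (e i), sq_abs (e i)]
  exact mul_le_mul_of_nonneg_right h1 (sq_nonneg _)

lemma frob_nonneg' {n d : ℕ} (M : Matrix (Fin n) (Fin d) ℝ) : 0 ≤ frob M :=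
  Real.sqrt_nonneg _

/-- linear convergence of the iterative pre-conditioner matrix `K(t)`
to `K_β = (AᵀA + βI)⁻¹` in the Frobenius norm, with rate `ρ ∈ [ϱ, 1)`. -/
theorem ipg_preconditioner_frobenius_contraction
    (n d : ℕ) (hd : 0 < d)
    (A : Matrix (Fin n) (Fin d) ℝ)
    (lam : Fin d → ℝ) (V : Matrix (Fin d) (Fin d) ℝ)
    (hV : Vᵀ * V = 1)
    (hdiag : Aᵀ * A = V * Matrix.diagonal lam * Vᵀ)
    (hanti : Antitone lam)
    (α β : ℝ) (hβ : 0 < β)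
    (hα0 : 0 < α) (hα : α < 2 / (lam ⟨0, hd⟩ + β))
    (K : ℕ → Matrix (Fin d) (Fin d) ℝ)
    (hK : ∀ t, K (t + 1) = K t - α • ((Aᵀ * A + β • 1) * K t - 1)) :
    ∃ ρ : ℝ,
      (lam ⟨0, hd⟩ - lam ⟨d - 1, by omega⟩) /
          (lam ⟨0, hd⟩ + lam ⟨d - 1, by omega⟩ + 2 * β) ≤ ρ ∧
      ρ < 1 ∧
      ∀ t : ℕ,
        frob (K t - (Aᵀ * A + β • 1)⁻¹) ≤ ρ ^ t * frob (K 0 - (Aᵀ * A + β • 1)⁻¹) := by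
  have hVV' : V * Vᵀ = 1 := mul_eq_one_comm.mp hV
  set i0 : Fin d := ⟨0, hd⟩
  set id' : Fin d := ⟨d - 1, by omega⟩
  -- eigenvalues are nonnegative
  have hDeq : Matrix.diagonal lam = Vᵀ * (Aᵀ * A) * V := by
    rw [hdiag, ← Matrix.mul_assoc, ← Matrix.mul_assoc, hV, Matrix.one_mul,
      Matrix.mul_assoc, hV, Matrix.mul_one]
  have hlam : ∀ i, 0 ≤ lam i := by
    intro i
    have h1 : lam i = Matrix.diagonal lam i i := by simp
    have h2 : Vᵀ * (Aᵀ * A) * V = (A * V)ᵀ * (A * V) := by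
      rw [Matrix.transpose_mul, Matrix.mul_assoc, Matrix.mul_assoc, Matrix.mul_assoc]
    rw [h1, hDeq, h2]
    rw [Matrix.mul_apply]
    refine Finset.sum_nonneg fun k _ => ?_
    simp only [Matrix.transpose_apply]
    exact mul_self_nonneg _
  have hmono : ∀ i : Fin d, lam id' ≤ lam i ∧ lam i ≤ lam i0 := by
    intro i
    constructor
    · exact hanti (by simp [Fin.le_def, id']; omega)
    · exact hanti (by simp [Fin.le_def, i0])
  -- scalars
  set a : ℝ := α * (lam id' + β) with ha_def
  set b : ℝ := α * (lam i0 + β) with hb_def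
  have hl0 : 0 ≤ lam i0 := hlam i0
  have hld : 0 ≤ lam id' := hlam id'
  have hld0 : lam id' ≤ lam i0 := (hmono id').2
  have ha0 : 0 < a := mul_pos hα0 (by linarith)
  have hab : a ≤ b := by
    apply mul_le_mul_of_nonneg_left _ hα0.le
    linarith
  have hb2 : b < 2 := by
    have h1 : 0 < lam i0 + β := by linarith
    calc b < (2 / (lam i0 + β)) * (lam i0 + β) := by
            exact mul_lt_mul_of_pos_right hα h1
      _ = 2 := by field_simp
  set ρ : ℝ := max |1 - a| |1 - b| with hρ_def
  have hρ0 : 0 ≤ ρ := by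
    rw [hρ_def]; exact le_trans (abs_nonneg _) (le_max_left _ _)
  have hρa : 1 - a ≤ ρ := by
    rw [hρ_def]; exact le_trans (le_abs_self _) (le_max_left _ _)
  have hρa' : a - 1 ≤ ρ := by
    rw [hρ_def, abs_sub_comm]; exact le_trans (le_abs_self _) (le_max_left _ _)
  have hρb : b - 1 ≤ ρ := by
    rw [hρ_def, abs_sub_comm 1 b]; exact le_trans (le_abs_self _) (le_max_right _ _)
  have hρb' : 1 - b ≤ ρ := by
    rw [hρ_def]; exact le_trans (le_abs_self _) (le_max_right _ _)
  have hρ1 : ρ < 1 := by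
    apply max_lt
    · rw [abs_lt]; constructor <;> linarith
    · rw [abs_lt]; constructor <;> linarith
  refine ⟨ρ, ?_, hρ1, ?_⟩
  · -- ϱ ≤ ρ
    have hden : 0 < lam i0 + lam id' + 2 * β := by linarith
    rw [div_le_iff₀ hden]
    have key : b - a ≤ ρ * (a + b) := by
      nlinarith [mul_nonneg (by linarith : (0:ℝ) ≤ 1 - ρ) (by linarith : (0:ℝ) ≤ 1 + ρ - b),
        mul_nonneg (by linarith : (0:ℝ) ≤ a - (1 - ρ)) (by linarith : (0:ℝ) ≤ 1 + ρ)]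
    have key2 : α * (lam i0 - lam id') ≤ α * (ρ * (lam i0 + lam id' + 2 * β)) := by
      have : b - a = α * (lam i0 - lam id') := by rw [ha_def, hb_def]; ring
      have h2 : ρ * (a + b) = α * (ρ * (lam i0 + lam id' + 2 * β)) := by
        rw [ha_def, hb_def]; ring
      linarith [key, this.symm.le, h2.le]
    exact le_of_mul_le_mul_left key2 hα0
  · -- convergence
    set P : Matrix (Fin d) (Fin d) ℝ := Aᵀ * A + β • 1 with hP_def
    set N : Matrix (Fin d) (Fin d) ℝ :=
      V * Matrix.diagonal (fun i => (lam i + β)⁻¹) * Vᵀ with hN_def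
    have hsmul1 : (β • (1 : Matrix (Fin d) (Fin d) ℝ)) =
        Matrix.diagonal (fun _ => β) := by
      ext i j
      by_cases h : i = j <;>
        simp [h, Matrix.one_apply, Matrix.diagonal_apply]
    have hPdiag : P = V * Matrix.diagonal (fun i => lam i + β) * Vᵀ := by
      rw [hP_def, hdiag, hsmul1]
      have : Matrix.diagonal (fun i => lam i + β) =
          Matrix.diagonal lam + Matrix.diagonal (fun _ => β) := by
        rw [← Matrix.diagonal_add]
      rw [this, Matrix.mul_add, Matrix.add_mul]
      congr 1
      have : V * Matrix.diagonal (fun _ : Fin d => β) = Matrix.diagonal (fun _ => β) * V := by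
        ext i j
        simp [Matrix.mul_apply, Matrix.diagonal_apply, Finset.sum_ite_eq, Finset.sum_ite_eq']
        ring
      rw [this, Matrix.mul_assoc, hVV', Matrix.mul_one]
  -- P * N = 1
    have hne : ∀ i : Fin d, lam i + β ≠ 0 := fun i => by have := hlam i; positivity
    have hPN : P * N = 1 := by
      rw [hPdiag, hN_def]
      simp only [Matrix.mul_assoc]
      rw [← Matrix.mul_assoc Vᵀ V, hV, Matrix.one_mul,
        ← Matrix.mul_assoc (Matrix.diagonal _) (Matrix.diagonal _),
        Matrix.diagonal_mul_diagonal]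
      have : (fun i => (lam i + β) * (lam i + β)⁻¹) = fun _ : Fin d => (1:ℝ) := by
        funext i; exact mul_inv_cancel₀ (hne i)
      rw [this, Matrix.diagonal_one, Matrix.one_mul, hVV']
    have hPinv : P⁻¹ = N := Matrix.inv_eq_right_inv hPN
    -- contraction matrix
    set e : Fin d → ℝ := fun i => 1 - α * (lam i + β) with he_def
    have hC : (1 : Matrix (Fin d) (Fin d) ℝ) - α • P = V * Matrix.diagonal e * Vᵀ := by
      have h1 : Matrix.diagonal e =
          (1 : Matrix (Fin d) (Fin d) ℝ) - α • Matrix.diagonal (fun i => lam i + β) := by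
        ext i j
        by_cases h : i = j <;>
          simp [h, Matrix.diagonal_apply, Matrix.one_apply, he_def]
      rw [h1, Matrix.mul_sub, Matrix.sub_mul, Matrix.mul_one, hVV']
      congr 1
      rw [Matrix.mul_smul, Matrix.smul_mul, hPdiag]
    have hebound : ∀ i, |e i| ≤ ρ := by
      intro i
      have h1 := (hmono i).1
      have h2 := (hmono i).2
      have hx1 : e i ≤ 1 - a := by
        rw [he_def, ha_def]; simp only
        nlinarith
      have hx2 : 1 - b ≤ e i := by
        rw [he_def, hb_def]; simp only
        nlinarith
      rw [abs_le]
      constructor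
      · linarith
      · linarith
    -- recursion for the error
    have hrec : ∀ t, K (t + 1) - N = ((1 : Matrix (Fin d) (Fin d) ℝ) - α • P) * (K t - N) := by
      intro t
      rw [hK t]
      rw [Matrix.sub_mul, Matrix.one_mul, Matrix.smul_mul, Matrix.mul_sub, hPN]
      abel
    have hcontr : ∀ X : Matrix (Fin d) (Fin d) ℝ,
        frob (((1 : Matrix (Fin d) (Fin d) ℝ) - α • P) * X) ≤ ρ * frob X := by
      intro X
      rw [hC, Matrix.mul_assoc, Matrix.mul_assoc]
      rw [frob_mul_orth V _ hV]
      calc frob (Matrix.diagonal e * (Vᵀ * X)) ≤ ρ * frob (Vᵀ * X) :=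
            frob_diagonal_mul_le e _ ρ hρ0 hebound
        _ = ρ * frob X := by
            rw [frob_mul_orth Vᵀ X (by rw [Matrix.transpose_transpose]; exact hVV')]
    intro t
    rw [hPinv]
    induction t with
    | zero => simp
    | succ t ih =>
      calc frob (K (t + 1) - N) = frob (((1:Matrix (Fin d) (Fin d) ℝ) - α • P) * (K t - N)) := by
            rw [hrec t]
        _ ≤ ρ * frob (K t - N) := hcontr _
        _ ≤ ρ * (ρ ^ t * frob (K 0 - N)) := mul_le_mul_of_nonneg_left ih hρ0
        _ = ρ ^ (t + 1) * frob (K 0 - N) := by ring
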